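/- ENCO gradient formula for the edge-orientation parameter θ (Equation (9) of Appendix C.1), using the antisymmetry θ_{ji} = −θ_{ij}: the derivative with respect to θ_{ij} of the mixture of expected losses under interventions on node i and on node j equals σ'(θ_{ij})·( p(I_i)·σ(γ_{ij})·E_{I_i,C_{−ij}}[L_{X_i→X_j} − L_{X_i↛X_j}] − p(I_j)·σ(γ_{ji})·E_{I_j,C_{−ij}}[L_{X_j→X_i} − L_{X_j↛X_i}] ). Precisely: let S be a finite type with distinct elements e e' : S, let p : S → ℝ, γ₁ γ₂ w₁ w₂ θ : ℝ, and L₁ L₂ : (S → Bool) → ℝ. Define F : ℝ → ℝ by F(t) = w₁ · ∑_{c : S → Bool} (∏_{s : S} if s = e then (if c s then σ(γ₁)·σ(t) else 1 − σ(γ₁)·σ(t)) else (if c s then p s else 1 − p s)) · L₁(c) + w₂ · ∑_{c : S → Bool} (∏_{s : S} if s = e' then (if c s then σ(γ₂)·σ(−t) else 1 − σ(γ₂)·σ(−t)) else (if c s then p s else 1 − p s)) · L₂(c). Then F has derivative at t = θ equal to σ(θ)·(1 − σ(θ)) · ( w₁·σ(γ₁) · ∑_{c : S → Bool, c e = false}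 (∏_{s ≠ e} if c s then p s else 1 − p s) · (L₁(Function.update c e true) − L₁(Function.update c e false)) − w₂·σ(γ₂) · ∑_{c : S → Bool, c e' = false} (∏_{s ≠ e'} if c s then p s else 1 − p s) · (L₂(Function.update c e' true) − L₂(Function.update c e' false)) ) (in the sense of HasDerivAt). -/

import Mathlib

/-- The logistic sigmoid `σ(x) = (1 + exp(-x))⁻¹`. -/
noncomputable def logisticSigmoid (x : ℝ) : ℝ := (1 + Real.exp (-x))⁻¹

lemma sigmoid_pos_den (x : ℝ) : (1 : ℝ) + Real.exp (-x) ≠ 0 := by positivity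

lemma hasDerivAt_sigmoid (x : ℝ) :
    HasDerivAt logisticSigmoid (logisticSigmoid x * (1 - logisticSigmoid x)) x := by
  have h1 : HasDerivAt (fun t : ℝ => 1 + Real.exp (-t)) (-Real.exp (-x)) x := by
    simpa using (((Real.hasDerivAt_exp (-x)).comp x ((hasDerivAt_id x).neg)).const_add 1)
  have h := h1.inv (sigmoid_pos_den x)
  refine h.congr_deriv ?_
  unfold logisticSigmoid
  have := sigmoid_pos_den x
  field_simp
  ring

lemma sigmoid_neg (x : ℝ) : logisticSigmoid (-x) = 1 - logisticSigmoid x := by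
  unfold logisticSigmoid
  rw [neg_neg, Real.exp_neg]
  have h1 : Real.exp (-x) ≠ 0 := Real.exp_ne_zero _
  have h2 := sigmoid_pos_den x
  have h3 : (1 : ℝ) + (Real.exp (-x))⁻¹ ≠ 0 := by positivity
  field_simp
  ring

section Aux
variable {S : Type*} [Fintype S] [DecidableEq S]

lemma prod_update (e : S) (w : S → Bool → ℝ) (c : S → Bool) (b : Bool) :
    (∏ s ∈ Finset.univ.erase e, w s (Function.update c e b s))
      = ∏ s ∈ Finset.univ.erase e, w s (c s) := by
  refine Finset.prod_congr rfl fun s hs => ?_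
  rw [Function.update_of_ne (Finset.ne_of_mem_erase hs)]

omit [Fintype S] in
lemma update_self_of_eq {e : S} {c : S → Bool} {b : Bool} (h : c e = b) :
    Function.update c e b = c := by
  ext s
  rcases eq_or_ne s e with rfl | hs
  · simp [h]
  · simp [hs]

lemma pair_sum (e : S) (w : S → Bool → ℝ) (L : (S → Bool) → ℝ) :
    ∑ c : S → Bool, (if c e then (1:ℝ) else -1) * ((∏ s ∈ Finset.univ.erase e, w s (c s)) * L c)
      = ∑ c ∈ Finset.univ.filter (fun c : S → Bool => c e = false),
          (∏ s ∈ Finset.univ.erase e, w s (c s)) *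
            (L (Function.update c e true) - L (Function.update c e false)) := by
  classical
  rw [← Finset.sum_filter_add_sum_filter_not Finset.univ (fun c : S → Bool => c e = true)]
  have hnot : Finset.univ.filter (fun c : S → Bool => ¬ (c e = true))
      = Finset.univ.filter (fun c : S → Bool => c e = false) := by
    apply Finset.filter_congr; intro c _; simp
  rw [hnot]
  have h1 : ∑ c ∈ Finset.univ.filter (fun c : S → Bool => c e = true),
      (if c e then (1:ℝ) else -1) * ((∏ s ∈ Finset.univ.erase e, w s (c s)) * L c)
      = ∑ c ∈ Finset.univ.filter (fun c : S → Bool => c e = false),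
          (∏ s ∈ Finset.univ.erase e, w s (c s)) * L (Function.update c e true) := by
    refine Finset.sum_bij' (fun c _ => Function.update c e false)
      (fun c _ => Function.update c e true) ?_ ?_ ?_ ?_ ?_
    · intro c hc; simp
    · intro c hc; simp
    · intro c hc
      simp only [Finset.mem_filter] at hc
      simp only [Function.update_idem]
      exact update_self_of_eq hc.2
    · intro c hc
      simp only [Finset.mem_filter] at hc
      simp only [Function.update_idem]
      exact update_self_of_eq hc.2
    · intro c hc
      simp only [Finset.mem_filter] at hc
      simp only [Function.update_idem]
      rw [prod_update, update_self_of_eq hc.2]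
      simp [hc.2]
  rw [h1, ← Finset.sum_add_distrib]
  refine Finset.sum_congr rfl fun c hc => ?_
  simp only [Finset.mem_filter] at hc
  rw [hc.2, update_self_of_eq hc.2]
  simp
  ring

lemma prod_split (e : S) (p : S → ℝ) (c : S → Bool) (q : ℝ) :
    (∏ s : S, if s = e then (if c s then q else 1 - q) else (if c s then p s else 1 - p s))
      = (if c e then q else 1 - q) * ∏ s ∈ Finset.univ.erase e, (if c s then p s else 1 - p s) := by
  rw [← Finset.mul_prod_erase Finset.univ _ (Finset.mem_univ e)]
  simp only [if_pos rfl]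
  congr 1
  refine Finset.prod_congr rfl fun s hs => ?_
  rw [if_neg (Finset.ne_of_mem_erase hs)]

lemma sum_hasDerivAt (e : S) (p : S → ℝ) (L : (S → Bool) → ℝ) {Q : ℝ → ℝ} {q' θ : ℝ}
    (hQ : HasDerivAt Q q' θ) :
    HasDerivAt (fun t : ℝ => ∑ c : S → Bool,
        (∏ s : S, if s = e then (if c s then Q t else 1 - Q t)
          else (if c s then p s else 1 - p s)) * L c)
      (q' * ∑ c ∈ Finset.univ.filter (fun c : S → Bool => c e = false),
          (∏ s ∈ Finset.univ.erase e, if c s then p s else 1 - p s) *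
            (L (Function.update c e true) - L (Function.update c e false))) θ := by
  have pair := pair_sum e (fun s b => if b then p s else 1 - p s) L
  have hfun : ∀ t : ℝ, (∑ c : S → Bool, (if c e then Q t else 1 - Q t) *
          ((∏ s ∈ Finset.univ.erase e, if c s then p s else 1 - p s) * L c))
      = ∑ c : S → Bool,
      (∏ s : S, if s = e then (if c s then Q t else 1 - Q t)
        else (if c s then p s else 1 - p s)) * L c := by
    intro t
    refine Finset.sum_congr rfl fun c _ => ?_
    rw [prod_split]; ring
  have key : HasDerivAt (fun t : ℝ => ∑ c : S → Bool, (if c e then Q t else 1 - Q t) *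
        ((∏ s ∈ Finset.univ.erase e, if c s then p s else 1 - p s) * L c))
      (∑ c : S → Bool, (if c e then q' else -q') *
        ((∏ s ∈ Finset.univ.erase e, if c s then p s else 1 - p s) * L c)) θ := by
    refine HasDerivAt.fun_sum fun c _ => ?_
    by_cases hc : c e
    · simp only [hc, if_true]
      exact hQ.mul_const _
    · simp only [hc, if_false]
      simpa using ((hQ.const_sub 1).mul_const
        ((∏ s ∈ Finset.univ.erase e, if c s then p s else 1 - p s) * L c))
  have heq : (∑ c : S → Bool, (if c e then q' else -q') *
        ((∏ s ∈ Finset.univ.erase e, if c s then p s else 1 - p s) * L c))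
      = q' * ∑ c ∈ Finset.univ.filter (fun c : S → Bool => c e = false),
          (∏ s ∈ Finset.univ.erase e, if c s then p s else 1 - p s) *
            (L (Function.update c e true) - L (Function.update c e false)) := by
    rw [← pair, Finset.mul_sum]
    refine Finset.sum_congr rfl fun c _ => ?_
    by_cases hc : c e <;> simp [hc] <;> ring
  rw [← heq]
  exact key.congr_of_eventuallyEq (by filter_upwards with t; rw [hfun])

end Aux

/-- ENCO gradient formula for the edge-orientation parameter `θ`
(Equation (9) of Appendix C.1), using the antisymmetry `θ_{ji} = −θ_{ij}`. -/
theorem enco_theta_gradient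
    {S : Type*} [Fintype S] [DecidableEq S] (e e' : S) (hee' : e ≠ e') (p : S → ℝ)
    (γ₁ γ₂ w₁ w₂ θ : ℝ) (L₁ L₂ : (S → Bool) → ℝ) :
    HasDerivAt
      (fun t : ℝ =>
        w₁ * ∑ c : S → Bool,
          (∏ s : S,
            if s = e then
              (if c s then logisticSigmoid γ₁ * logisticSigmoid t
               else 1 - logisticSigmoid γ₁ * logisticSigmoid t)
            else (if c s then p s else 1 - p s)) * L₁ c
        + w₂ * ∑ c : S → Bool,
          (∏ s : S,
            if s = e' then
              (if c s then logisticSigmoid γ₂ * logisticSigmoid (-t)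
               else 1 - logisticSigmoid γ₂ * logisticSigmoid (-t))
            else (if c s then p s else 1 - p s)) * L₂ c)
      (logisticSigmoid θ * (1 - logisticSigmoid θ) *
        (w₁ * logisticSigmoid γ₁ *
          (∑ c ∈ Finset.univ.filter (fun c : S → Bool => c e = false),
            (∏ s ∈ Finset.univ.erase e, if c s then p s else 1 - p s) *
              (L₁ (Function.update c e true) - L₁ (Function.update c e false)))
        - w₂ * logisticSigmoid γ₂ *
          (∑ c ∈ Finset.univ.filter (fun c : S → Bool => c e' = false),
            (∏ s ∈ Finset.univ.erase e', if c s then p s else 1 - p s) *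
              (L₂ (Function.update c e' true) - L₂ (Function.update c e' false)))))
      θ := by
  have hQ₁ : HasDerivAt (fun t : ℝ => logisticSigmoid γ₁ * logisticSigmoid t)
      (logisticSigmoid γ₁ * (logisticSigmoid θ * (1 - logisticSigmoid θ))) θ :=
    (hasDerivAt_sigmoid θ).const_mul _
  have hσn : HasDerivAt (fun t : ℝ => logisticSigmoid (-t))
      (-(logisticSigmoid θ * (1 - logisticSigmoid θ))) θ := by
    have h0 := (hasDerivAt_sigmoid (-θ)).comp θ ((hasDerivAt_id θ).neg)
    refine h0.congr_deriv ?_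
    rw [sigmoid_neg]
    ring
  have hQ₂ : HasDerivAt (fun t : ℝ => logisticSigmoid γ₂ * logisticSigmoid (-t))
      (logisticSigmoid γ₂ * -(logisticSigmoid θ * (1 - logisticSigmoid θ))) θ :=
    hσn.const_mul _
  have D₁ := (sum_hasDerivAt e p L₁ hQ₁).const_mul w₁
  have D₂ := (sum_hasDerivAt e' p L₂ hQ₂).const_mul w₂
  have := D₁.add D₂
  refine this.congr_deriv ?_
  ring
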